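/- Let Γ be a group and let (N_n)_{n∈ℕ} be a sequence of normal subgroups of Γ with N_{n+1} ≤ N_n for all n and ⋂_{n} N_n = {1}. For n ∈ ℕ let q_n : Γ → Γ/N_n denote the quotient homomorphism. Then for every ε > 0, every finite subset F ⊆ Γ, and every square-summable function ξ : Γ → ℂ (i.e., ∑_{x∈Γ} |ξ(x)|² < ∞), there exist n ∈ ℕ and a finitely supported function η : Γ/N_n → ℂ with ∑_{y} |η(y)|² ≤ ∑_{x} |ξ(x)|², such that for all γ ∈ F, | ∑'_{x∈Γ} ξ(γ⁻¹·x)·conj(ξ(x)) − ∑_{y∈Γ/N_n} η(q_n(γ)⁻¹·y)·conj(η(y)) | ≤ ε. -/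

import Mathlib

open scoped ComplexConjugate Pointwise

lemma aux_cs_real {ι : Type*} (f g : ι → ℝ) (hfnn : ∀ i, 0 ≤ f i) (hgnn : ∀ i, 0 ≤ g i)
    (hf : Summable fun i => f i ^ 2) (hg : Summable fun i => g i ^ 2) :
    Summable (fun i => f i * g i) ∧
      (∑' i, f i * g i) ≤ Real.sqrt (∑' i, f i ^ 2) * Real.sqrt (∑' i, g i ^ 2) := by
  have hsum : Summable (fun i => f i * g i) := by
    refine Summable.of_nonneg_of_le (fun i => mul_nonneg (hfnn i) (hgnn i))
      (fun i => ?_) ((hf.add hg).div_const 2)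
    nlinarith [sq_nonneg (f i - g i)]
  refine ⟨hsum, Summable.tsum_le_of_sum_le hsum fun s => ?_⟩
  refine (Real.sum_mul_le_sqrt_mul_sqrt s f g).trans ?_
  gcongr <;>
    first
      | exact Real.sqrt_nonneg _
      | exact Summable.sum_le_tsum s (fun i _ => sq_nonneg _) hf
      | exact Summable.sum_le_tsum s (fun i _ => sq_nonneg _) hg

lemma aux_cs {ι : Type*} (f g : ι → ℂ)
    (hf : Summable fun i => ‖f i‖ ^ 2) (hg : Summable fun i => ‖g i‖ ^ 2) :
    Summable (fun i => f i * conj (g i)) ∧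
      ‖∑' i, f i * conj (g i)‖ ≤
        Real.sqrt (∑' i, ‖f i‖ ^ 2) * Real.sqrt (∑' i, ‖g i‖ ^ 2) := by
  obtain ⟨hs, hb⟩ := aux_cs_real (fun i => ‖f i‖) (fun i => ‖g i‖)
    (fun i => norm_nonneg _) (fun i => norm_nonneg _) hf hg
  have hnorm : ∀ i, ‖f i * conj (g i)‖ = ‖f i‖ * ‖g i‖ := by
    intro i; rw [norm_mul, RCLike.norm_conj]
  have hsum : Summable (fun i => f i * conj (g i)) :=
    Summable.of_norm (by simpa [hnorm] using hs)
  refine ⟨hsum, (norm_tsum_le_tsum_norm (by simpa [hnorm] using hs)).trans ?_⟩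
  simpa [hnorm] using hb

/-- the left regular representation of a group `Γ` is weakly contained in the
direct sum of the regular representations of the quotients `Γ/Nₙ` along a decreasing
sequence of normal subgroups with trivial intersection: every matrix coefficient of `λ_Γ`
at a square-summable `ξ`, on a finite set `F`, is `ε`-approximated by a matrix coefficient
of some `λ_{Γ/Nₙ}` at a finitely supported `η` with `‖η‖₂ ≤ ‖ξ‖₂`. -/
theorem regular_rep_weakly_contained_in_quotients {Γ : Type*} [Group Γ]
    (N : ℕ → Subgroup Γ) [∀ n, (N n).Normal]
    (hdec : ∀ n, N (n + 1) ≤ N n) (hinter : ⨅ n, N n = ⊥)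
    (ε : ℝ) (hε : 0 < ε) (F : Finset Γ)
    (ξ : Γ → ℂ) (hξ : Summable fun x => ‖ξ x‖ ^ 2) :
    ∃ (n : ℕ) (η : Γ ⧸ N n → ℂ), (Function.support η).Finite ∧
      (∑' y, ‖η y‖ ^ 2) ≤ (∑' x, ‖ξ x‖ ^ 2) ∧
      ∀ γ ∈ F,
        ‖(∑' x : Γ, ξ (γ⁻¹ * x) * conj (ξ x)) -
            ∑' y : Γ ⧸ N n, η ((QuotientGroup.mk' (N n) γ)⁻¹ * y) * conj (η y)‖ ≤ ε := by
  classical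
  set S : ℝ := ∑' x, ‖ξ x‖ ^ 2 with hS_def
  have hS0 : 0 ≤ S := tsum_nonneg fun x => sq_nonneg _
  set δ : ℝ := ε / (2 * Real.sqrt S + 1) with hδ_def
  have hden : 0 < 2 * Real.sqrt S + 1 := by positivity
  have hδ : 0 < δ := div_pos hε hden
  -- choose a finite truncation set A
  obtain ⟨A, hA⟩ : ∃ A : Finset Γ, S - δ ^ 2 < ∑ x ∈ A, ‖ξ x‖ ^ 2 := by
    have := hξ.hasSum.eventually (Ioi_mem_nhds (show S - δ ^ 2 < S by nlinarith))
    exact this.exists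
  have htail : (∑' x : {x // x ∉ A}, ‖ξ (x : Γ)‖ ^ 2) < δ ^ 2 := by
    have h := Summable.sum_add_tsum_compl (s := A) hξ
    have : (∑' x : (↑(↑A : Set Γ)ᶜ : Set Γ), ‖ξ (x : Γ)‖ ^ 2) < δ ^ 2 := by
      rw [← hS_def] at h; nlinarith [hA]
    exact this
  -- the truncation and the tail
  set ξ' : Γ → ℂ := fun x => if x ∈ A then ξ x else 0 with hξ'_def
  set ζ : Γ → ℂ := fun x => if x ∈ A then 0 else ξ x with hζ_def
  have hsplit : ∀ x, ξ x = ξ' x + ζ x := by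
    intro x; simp only [hξ'_def, hζ_def]; split_ifs <;> ring
  have hξ'le : ∀ x, ‖ξ' x‖ ^ 2 ≤ ‖ξ x‖ ^ 2 := by
    intro x; simp only [hξ'_def]; split_ifs <;> simp [sq_nonneg]
  have hζle : ∀ x, ‖ζ x‖ ^ 2 ≤ ‖ξ x‖ ^ 2 := by
    intro x; simp only [hζ_def]; split_ifs <;> simp [sq_nonneg]
  have hξ's : Summable fun x => ‖ξ' x‖ ^ 2 :=
    Summable.of_nonneg_of_le (fun x => sq_nonneg _) hξ'le hξ
  have hζs : Summable fun x => ‖ζ x‖ ^ 2 :=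
    Summable.of_nonneg_of_le (fun x => sq_nonneg _) hζle hξ
  have hξ'S : (∑' x, ‖ξ' x‖ ^ 2) ≤ S := Summable.tsum_le_tsum hξ'le hξ's hξ
  have hζS : (∑' x, ‖ζ x‖ ^ 2) < δ ^ 2 := by
    have : (∑' x, ‖ζ x‖ ^ 2) = ∑' x : {x // x ∉ A}, ‖ξ (x : Γ)‖ ^ 2 := by
      rw [← tsum_subtype_eq_of_support_subset (s := {x | x ∉ A})]
      · refine tsum_congr fun x => ?_
        simp only [hζ_def]
        split_ifs with h
        · exact absurd h x.2
        · rfl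
      · intro x hx
        simp only [Function.mem_support, hζ_def] at hx
        by_contra hmem
        simp only [Set.mem_setOf_eq, not_not] at hmem
        simp [hmem] at hx
    rw [this]; exact htail
  have hζδ : Real.sqrt (∑' x, ‖ζ x‖ ^ 2) ≤ δ := by
    rw [show δ = Real.sqrt (δ ^ 2) by rw [Real.sqrt_sq hδ.le]]
    exact Real.sqrt_le_sqrt hζS.le
  have hxisqrt : Real.sqrt (∑' x, ‖ξ' x‖ ^ 2) ≤ Real.sqrt S := Real.sqrt_le_sqrt hξ'S
  -- the finite sets T and D
  set T : Finset Γ := (insert (1 : Γ) F)⁻¹ * A with hT_def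
  set D : Finset Γ := T⁻¹ * T with hD_def
  have hAT : ∀ a ∈ A, a ∈ T := by
    intro a ha
    have : (1 : Γ)⁻¹ * a ∈ T :=
      Finset.mul_mem_mul (Finset.inv_mem_inv (Finset.mem_insert_self 1 F)) ha
    simpa using this
  have hγT : ∀ γ ∈ F, ∀ a ∈ A, γ⁻¹ * a ∈ T := by
    intro γ hγ a ha
    exact Finset.mul_mem_mul (Finset.inv_mem_inv (Finset.mem_insert_of_mem hγ)) ha
  -- choose n so that the quotient map is injective on T
  obtain ⟨n, hn⟩ : ∃ n, ∀ c ∈ D, c ∈ N n → c = 1 := by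
    have hant : Antitone N := antitone_nat_of_succ_le hdec
    have hex : ∀ c : Γ, c ≠ 1 → ∃ m, c ∉ N m := by
      intro c hc
      by_contra h
      push_neg at h
      have hmem : c ∈ ⨅ m, N m := Subgroup.mem_iInf.mpr h
      rw [hinter] at hmem
      exact hc (Subgroup.mem_bot.mp hmem)
    choose! m hm using hex
    refine ⟨D.sup m, fun c hcD hcN => ?_⟩
    by_contra hc1
    exact hm c hc1 (hant (Finset.le_sup hcD) hcN)
  have hinj : ∀ a ∈ T, ∀ b ∈ T, QuotientGroup.mk' (N n) a = QuotientGroup.mk' (N n) b → a = b := by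
    intro a ha b hb hab
    have hmem : a⁻¹ * b ∈ N n := by
      rw [QuotientGroup.mk'_apply, QuotientGroup.mk'_apply] at hab
      exact QuotientGroup.eq.mp hab
    have hD : a⁻¹ * b ∈ D := Finset.mul_mem_mul (Finset.inv_mem_inv ha) hb
    exact inv_mul_eq_one.mp (hn _ hD hmem)
  set q : Γ → Γ ⧸ N n := fun x => QuotientGroup.mk' (N n) x with hq_def
  -- define η
  set η : Γ ⧸ N n → ℂ := fun y => ∑ a ∈ A, if q a = y then ξ a else 0 with hη_def
  have hη_mk : ∀ a ∈ A, η (q a) = ξ a := by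
    intro a ha
    simp only [hη_def]
    rw [Finset.sum_eq_single a]
    · simp
    · intro b hb hba
      have : ¬ (q b = q a) := fun h => hba (hinj b (hAT b hb) a (hAT a ha) h)
      simp [this]
    · intro h; exact absurd ha h
  have hη_zero : ∀ y, (∀ a ∈ A, q a ≠ y) → η y = 0 := by
    intro y hy
    simp only [hη_def]
    exact Finset.sum_eq_zero fun a ha => by simp [hy a ha]
  have hη_supp : Function.support η ⊆ ↑(A.image q) := by
    intro y hy
    by_contra hmem
    exact hy (hη_zero y fun a ha h => hmem (by rw [← h]; exact Finset.mem_image_of_mem q ha))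
  refine ⟨n, η, Set.Finite.subset (A.image q).finite_toSet hη_supp, ?_, ?_⟩
  · -- norm bound
    have hinj' : ∀ x ∈ A, ∀ y ∈ A, q x = q y → x = y :=
      fun a ha b hb h => hinj a (hAT a ha) b (hAT b hb) h
    have h1 : (∑' y, ‖η y‖ ^ 2) = ∑ y ∈ A.image q, ‖η y‖ ^ 2 := by
      refine tsum_eq_sum fun y hy => ?_
      rw [hη_zero y fun a ha h => hy (h ▸ Finset.mem_image_of_mem q ha)]
      simp
    rw [h1, Finset.sum_image hinj']
    calc ∑ a ∈ A, ‖η (q a)‖ ^ 2 = ∑ a ∈ A, ‖ξ a‖ ^ 2 :=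
          Finset.sum_congr rfl fun a ha => by rw [hη_mk a ha]
      _ ≤ S := Summable.sum_le_tsum A (fun a _ => sq_nonneg _) hξ
  · -- coefficient bound
    intro γ hγ
    have hinj' : ∀ x ∈ A, ∀ y ∈ A, q x = q y → x = y :=
      fun a ha b hb h => hinj a (hAT a ha) b (hAT b hb) h
    -- shift-invariance of summability and of the ℓ² sums
    have hshiftsum : ∀ f : Γ → ℂ, (Summable fun x => ‖f x‖ ^ 2) →
        Summable fun x => ‖f (γ⁻¹ * x)‖ ^ 2 := by
      intro f hf
      exact ((Equiv.mulLeft γ⁻¹).summable_iff (f := fun x => ‖f x‖ ^ 2)).mpr hf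
    have hshifttsum : ∀ f : Γ → ℂ,
        (∑' x, ‖f (γ⁻¹ * x)‖ ^ 2) = ∑' x, ‖f x‖ ^ 2 := by
      intro f
      exact (Equiv.mulLeft γ⁻¹).tsum_eq (fun x => ‖f x‖ ^ 2)
    have hcs1 := aux_cs (fun x => ξ' (γ⁻¹ * x)) ξ' (hshiftsum ξ' hξ's) hξ's
    have hcs2 := aux_cs (fun x => ζ (γ⁻¹ * x)) ξ (hshiftsum ζ hζs) hξ
    have hcs3 := aux_cs (fun x => ξ' (γ⁻¹ * x)) ζ (hshiftsum ξ' hξ's) hζs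
    -- split the full matrix coefficient
    have hsum_split : (∑' x, ξ (γ⁻¹ * x) * conj (ξ x)) =
        (∑' x, ξ' (γ⁻¹ * x) * conj (ξ' x)) +
          ((∑' x, ζ (γ⁻¹ * x) * conj (ξ x)) + (∑' x, ξ' (γ⁻¹ * x) * conj (ζ x))) := by
      rw [← Summable.tsum_add hcs2.1 hcs3.1, ← Summable.tsum_add hcs1.1 (hcs2.1.add hcs3.1)]
      refine tsum_congr fun x => ?_
      have e1 := hsplit (γ⁻¹ * x)
      have e2 := hsplit x
      rw [e1, e2]
      simp only [map_add]
      ring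
    -- the quotient matrix coefficient equals the truncated one
    have hq_eq : (∑' y : Γ ⧸ N n, η ((QuotientGroup.mk' (N n) γ)⁻¹ * y) * conj (η y)) =
        ∑' x, ξ' (γ⁻¹ * x) * conj (ξ' x) := by
      rw [tsum_eq_sum (s := A.image q)
        (fun y hy => by
          rw [hη_zero y fun a ha h => hy (h ▸ Finset.mem_image_of_mem q ha)]
          simp)]
      rw [Finset.sum_image hinj']
      rw [tsum_eq_sum (s := A)
        (fun x hx => by
          have : ξ' x = 0 := by simp [hξ'_def, hx]
          rw [this]
          simp)]
      refine Finset.sum_congr rfl fun a ha => ?_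
      have hmk : (QuotientGroup.mk' (N n) γ)⁻¹ * q a = q (γ⁻¹ * a) := by
        simp [hq_def, map_mul, map_inv]
      rw [hmk, hη_mk a ha]
      have hη_val : η (q (γ⁻¹ * a)) = ξ' (γ⁻¹ * a) := by
        by_cases hmem : γ⁻¹ * a ∈ A
        · rw [hη_mk _ hmem]
          simp [hξ'_def, hmem]
        · rw [hη_zero (q (γ⁻¹ * a))
            (fun b hb hqb => hmem (hinj b (hAT b hb) _ (hγT γ hγ a ha) hqb ▸ hb))]
          simp [hξ'_def, hmem]
      rw [hη_val]
      have : ξ' a = ξ a := by simp [hξ'_def, ha]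
      rw [this]
    rw [hq_eq, hsum_split]
    rw [add_sub_cancel_left]
    have hb2 : ‖∑' x, ζ (γ⁻¹ * x) * conj (ξ x)‖ ≤ δ * Real.sqrt S := by
      refine hcs2.2.trans ?_
      rw [hshifttsum ζ]
      exact mul_le_mul hζδ le_rfl (Real.sqrt_nonneg _) hδ.le
    have hb3 : ‖∑' x, ξ' (γ⁻¹ * x) * conj (ζ x)‖ ≤ Real.sqrt S * δ := by
      refine hcs3.2.trans ?_
      rw [hshifttsum ξ']
      exact mul_le_mul hxisqrt hζδ (Real.sqrt_nonneg _) (Real.sqrt_nonneg _)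
    have hδε : δ * (2 * Real.sqrt S + 1) = ε := by
      rw [hδ_def]; field_simp
    have hfin : δ * Real.sqrt S + Real.sqrt S * δ ≤ ε := by nlinarith [hδ]
    exact (norm_add_le _ _).trans (by linarith [hb2, hb3])
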